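/- Let K be a field of characteristic zero, s ≥ 1, and let A be the algebra of differential polynomials in x and u^k_j with total derivative D. Let r, p ≥ 0, let a_0, …, a_r be s×s matrices over A, and let G_1, …, G_p, γ_1, …, γ_p, Q ∈ A^s. Assume that for each α ∈ {1,…,p} the covector γ_α is self-adjoint in the sense that γ_α'(P) = γ_α'^†(P) for all P ∈ A^s, and suppose f_1, …, f_p ∈ A and g_{αβ} ∈ A (1 ≤ α, β ≤ p) satisfy D(f_β) = γ_β·Q and D(g_{αβ}) = G_β·γ_α. Define R(Q) := Σ_{i=0}^r a_i·D^i(Q) + Σ_{β=1}^p f_β·G_β ∈ A^s and ζ_α := Σ_{i=0}^r (−1)^i D^i(a_iᵀ·γ_α) − Σ_{β=1}^p g_{αβ}·γ_β ∈ A^s. Then for each α = 1, …, p, the Lie derivative of γ_α along R(Q) equals the variational derivative of Q·ζ_α: for every k = 1, …, s, (γ_α'(R(Q)))_k + ((R(Q))'^†(γ_α))_k = δ(Q·ζ_α)/δu^k. -/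

import Mathlib

/-- The algebra of differential polynomials in `x` (the variable `none`) and
`u^k_j = X (some (k, j))`, `1 ≤ k ≤ s`, `j ≥ 0`, over a field `K`. -/
abbrev DiffPoly (K : Type*) [Field K] (s : ℕ) : Type _ :=
  MvPolynomial (Option (Fin s × ℕ)) K

/-- The variational derivative `δf/δu^k = Σ_{j≥0} (−1)^j D^j(∂f/∂u^k_j)`. -/
noncomputable def varDeriv {K : Type*} [Field K] {s : ℕ}
    (D : Derivation K (DiffPoly K s) (DiffPoly K s))
    (f : DiffPoly K s) (k : Fin s) : DiffPoly K s :=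
  ∑ᶠ j : ℕ, (-1 : DiffPoly K s) ^ j * (⇑D)^[j] (MvPolynomial.pderiv (some (k, j)) f)

/-- The directional derivative: `(γ'(P))_l = Σ_{j≥0} Σ_k (∂γ_l/∂u^k_j)·D^j(P_k)`. -/
noncomputable def dirDeriv {K : Type*} [Field K] {s : ℕ}
    (D : Derivation K (DiffPoly K s) (DiffPoly K s))
    (γ P : Fin s → DiffPoly K s) (l : Fin s) : DiffPoly K s :=
  ∑ᶠ j : ℕ, ∑ k : Fin s,
    MvPolynomial.pderiv (some (k, j)) (γ l) * (⇑D)^[j] (P k)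

/-- The formal-adjoint action:
`(γ'^†(P))_k = Σ_{j≥0} Σ_l (−1)^j D^j((∂γ_l/∂u^k_j)·P_l)`. -/
noncomputable def adjDeriv {K : Type*} [Field K] {s : ℕ}
    (D : Derivation K (DiffPoly K s) (DiffPoly K s))
    (γ P : Fin s → DiffPoly K s) (k : Fin s) : DiffPoly K s :=
  ∑ᶠ j : ℕ, ∑ l : Fin s, (-1 : DiffPoly K s) ^ j *
    (⇑D)^[j] (MvPolynomial.pderiv (some (k, j)) (γ l) * P l)

namespace Stmt12Aux
open MvPolynomial Finset

variable {K : Type*} [Field K] {s : ℕ}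
variable (D : Derivation K (DiffPoly K s) (DiffPoly K s))

lemma iter_zero (n : ℕ) : (⇑D)^[n] (0 : DiffPoly K s) = 0 :=
  Function.iterate_fixed (map_zero D) n

lemma iter_add (n : ℕ) (a b : DiffPoly K s) :
    (⇑D)^[n] (a + b) = (⇑D)^[n] a + (⇑D)^[n] b := by
  induction n generalizing a b with
  | zero => simp
  | succ n ih => simp only [Function.iterate_succ_apply, map_add, ih]

lemma iter_sum {ι : Type*} (t : Finset ι) (F : ι → DiffPoly K s) (n : ℕ) :
    (⇑D)^[n] (∑ i ∈ t, F i) = ∑ i ∈ t, (⇑D)^[n] (F i) := by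
  classical
  induction t using Finset.induction with
  | empty => simp [iter_zero]
  | insert _ _ h ih => rw [Finset.sum_insert h, iter_add, ih, Finset.sum_insert h]

lemma D_neg_one_pow (i : ℕ) : D ((-1 : DiffPoly K s) ^ i) = 0 := by
  induction i with
  | zero => simpa using D.map_one_eq_zero
  | succ n ih =>
      rw [pow_succ, Derivation.leibniz, smul_eq_mul, smul_eq_mul, ih]
      simp [D.map_one_eq_zero]

lemma exists_bound (f : DiffPoly K s) :
    ∃ N, ∀ (k : Fin s) (j : ℕ), N ≤ j → pderiv (some (k, j)) f = 0 := by
  classical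
  refine ⟨(f.vars.sup fun v => v.elim 0 Prod.snd) + 1, fun k j hj => ?_⟩
  apply pderiv_eq_zero_of_notMem_vars
  intro hmem
  have h2 := Finset.le_sup (f := fun v : Option (Fin s × ℕ) => v.elim 0 Prod.snd) hmem
  have h3 : j ≤ f.vars.sup fun v : Option (Fin s × ℕ) => v.elim 0 Prod.snd := h2
  omega

lemma exists_bound_vec (γ : Fin s → DiffPoly K s) :
    ∃ N, ∀ (l k : Fin s) (j : ℕ), N ≤ j → pderiv (some (k, j)) (γ l) = 0 := by
  choose N hN using fun l => exists_bound (γ l)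
  exact ⟨Finset.univ.sup N, fun l k j hj =>
    hN l k j (le_trans (Finset.le_sup (Finset.mem_univ l)) hj)⟩

lemma finsum_eq_range {M : Type*} [AddCommMonoid M] (F : ℕ → M) (N : ℕ)
    (h : ∀ j, N ≤ j → F j = 0) : ∑ᶠ j, F j = ∑ j ∈ Finset.range N, F j := by
  apply finsum_eq_sum_of_support_subset
  intro j hj
  simp only [Function.mem_support] at hj
  simp only [Finset.coe_range, Set.mem_Iio]
  by_contra hc
  exact hj (h j (by omega))

lemma varDeriv_eq_range (f : DiffPoly K s) (k : Fin s) (N : ℕ)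
    (h : ∀ j, N ≤ j → pderiv (some (k, j)) f = 0) :
    varDeriv D f k
      = ∑ j ∈ Finset.range N,
          (-1 : DiffPoly K s) ^ j * (⇑D)^[j] (pderiv (some (k, j)) f) := by
  apply finsum_eq_range
  intro j hj
  rw [h j hj, iter_zero, mul_zero]

lemma adjDeriv_eq_range (γ P : Fin s → DiffPoly K s) (k : Fin s) (N : ℕ)
    (h : ∀ (l : Fin s) (j : ℕ), N ≤ j → pderiv (some (k, j)) (γ l) = 0) :
    adjDeriv D γ P k
      = ∑ j ∈ Finset.range N, ∑ l, (-1 : DiffPoly K s) ^ j *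
          (⇑D)^[j] (pderiv (some (k, j)) (γ l) * P l) := by
  apply finsum_eq_range
  intro j hj
  apply Finset.sum_eq_zero
  intro l _
  rw [h l j hj, zero_mul, iter_zero, mul_zero]

lemma comm_succ (hx : D (X none) = 1)
    (hu : ∀ (k : Fin s) (j : ℕ), D (X (some (k, j))) = X (some (k, j + 1)))
    (k : Fin s) (j : ℕ) (f : DiffPoly K s) :
    pderiv (some (k, j + 1)) (D f)
      = D (pderiv (some (k, j + 1)) f) + pderiv (some (k, j)) f := by
  have hD01 : ∀ (v w : Option (Fin s × ℕ)),
      D (pderiv v (X w) : DiffPoly K s) = 0 := by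
    intro v w
    by_cases h : w = v
    · subst h; rw [pderiv_X_self]; exact D.map_one_eq_zero
    · rw [pderiv_X_of_ne h, map_zero]
  have hb : (⁅(pderiv (some (k, j + 1)) :
        Derivation K (DiffPoly K s) (DiffPoly K s)), D⁆ :
        Derivation K (DiffPoly K s) (DiffPoly K s))
      = pderiv (some (k, j)) := by
    apply MvPolynomial.derivation_ext
    intro i
    rw [Derivation.commutator_apply]
    match i with
    | none =>
      rw [hx, hD01, sub_zero, pderiv_one, pderiv_X_of_ne (by simp)]
    | some (l, i) =>
      rw [hu l i, hD01, sub_zero]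
      by_cases h : (l, i) = (k, j)
      · rw [Prod.ext_iff] at h
        obtain ⟨rfl, rfl⟩ := h
        rw [pderiv_X_self, pderiv_X_self]
      · rw [Prod.ext_iff] at h
        rw [pderiv_X_of_ne, pderiv_X_of_ne]
        · intro hc
          simp only [Option.some.injEq, Prod.mk.injEq] at hc
          exact h ⟨hc.1, hc.2⟩
        · intro hc
          simp only [Option.some.injEq, Prod.mk.injEq] at hc
          exact h ⟨hc.1, by omega⟩
  have := congrArg (fun (E : Derivation K (DiffPoly K s) (DiffPoly K s)) => E f) hb
  simp only [Derivation.commutator_apply] at this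
  linear_combination this

lemma comm_zero (hx : D (X none) = 1)
    (hu : ∀ (k : Fin s) (j : ℕ), D (X (some (k, j))) = X (some (k, j + 1)))
    (k : Fin s) (f : DiffPoly K s) :
    pderiv (some (k, 0)) (D f) = D (pderiv (some (k, 0)) f) := by
  have hD01 : ∀ (v w : Option (Fin s × ℕ)),
      D (pderiv v (X w) : DiffPoly K s) = 0 := by
    intro v w
    by_cases h : w = v
    · subst h; rw [pderiv_X_self]; exact D.map_one_eq_zero
    · rw [pderiv_X_of_ne h, map_zero]
  have hb : (⁅(pderiv (some (k, 0)) :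
        Derivation K (DiffPoly K s) (DiffPoly K s)), D⁆ :
        Derivation K (DiffPoly K s) (DiffPoly K s)) = 0 := by
    apply MvPolynomial.derivation_ext
    intro i
    rw [Derivation.commutator_apply]
    match i with
    | none =>
      rw [hx, hD01, sub_zero, pderiv_one]
      simp
    | some (l, i) =>
      rw [hu l i, hD01, sub_zero]
      rw [pderiv_X_of_ne (by simp)]
      simp
  have := congrArg (fun (E : Derivation K (DiffPoly K s) (DiffPoly K s)) => E f) hb
  simp only [Derivation.commutator_apply, Derivation.zero_apply] at this
  linear_combination this

lemma varDeriv_D (hx : D (X none) = 1)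
    (hu : ∀ (k : Fin s) (j : ℕ), D (X (some (k, j))) = X (some (k, j + 1)))
    (f : DiffPoly K s) (k : Fin s) : varDeriv D (D f) k = 0 := by
  obtain ⟨N, hN⟩ := exists_bound f
  have hDf : ∀ j, N + 1 ≤ j → pderiv (some (k, j)) (D f) = 0 := by
    intro j hj
    obtain ⟨m, rfl⟩ : ∃ m, j = m + 1 := ⟨j - 1, by omega⟩
    rw [comm_succ D hx hu, hN k (m + 1) (by omega), hN k m (by omega), map_zero,
      add_zero]
  rw [varDeriv_eq_range D (D f) k (N + 1) hDf]
  have htel : ∀ n, (∑ j ∈ Finset.range (n + 1),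
        (-1 : DiffPoly K s) ^ j * (⇑D)^[j] (pderiv (some (k, j)) (D f)))
      = (-1 : DiffPoly K s) ^ n * (⇑D)^[n + 1] (pderiv (some (k, n)) f) := by
    intro n
    induction n with
    | zero =>
      simp only [zero_add, Finset.range_one, Finset.sum_singleton, pow_zero, one_mul,
        Function.iterate_zero, id_eq, Function.iterate_one]
      exact comm_zero D hx hu k f
    | succ n ih =>
      rw [Finset.sum_range_succ, ih, comm_succ D hx hu, iter_add]
      rw [show ((⇑D)^[n + 1] (D (pderiv (some (k, n + 1)) f)))
            = (⇑D)^[n + 2] (pderiv (some (k, n + 1)) f) from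
          (Function.iterate_succ_apply (⇑D) (n + 1) _).symm]
      ring
  rw [htel N, hN k N le_rfl, iter_zero, mul_zero]

lemma varDeriv_add (f g : DiffPoly K s) (k : Fin s) :
    varDeriv D (f + g) k = varDeriv D f k + varDeriv D g k := by
  obtain ⟨N1, h1⟩ := exists_bound f
  obtain ⟨N2, h2⟩ := exists_bound g
  rw [varDeriv_eq_range D f k (max N1 N2)
      (fun j hj => h1 k j (le_trans (le_max_left _ _) hj)),
    varDeriv_eq_range D g k (max N1 N2)
      (fun j hj => h2 k j (le_trans (le_max_right _ _) hj)),
    varDeriv_eq_range D (f + g) k (max N1 N2) (fun j hj => by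
      rw [map_add, h1 k j (le_trans (le_max_left _ _) hj),
        h2 k j (le_trans (le_max_right _ _) hj), add_zero]),
    ← Finset.sum_add_distrib]
  exact Finset.sum_congr rfl fun j _ => by rw [map_add, iter_add, mul_add]

lemma varDeriv_dot (γ P : Fin s → DiffPoly K s) (k : Fin s) :
    varDeriv D (∑ l, γ l * P l) k = adjDeriv D γ P k + adjDeriv D P γ k := by
  obtain ⟨N1, h1⟩ := exists_bound_vec γ
  obtain ⟨N2, h2⟩ := exists_bound_vec P
  have hγ : ∀ (l : Fin s) (j : ℕ), max N1 N2 ≤ j →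
      pderiv (some (k, j)) (γ l) = 0 :=
    fun l j hj => h1 l k j (le_trans (le_max_left _ _) hj)
  have hP : ∀ (l : Fin s) (j : ℕ), max N1 N2 ≤ j →
      pderiv (some (k, j)) (P l) = 0 :=
    fun l j hj => h2 l k j (le_trans (le_max_right _ _) hj)
  have hsum : ∀ j, max N1 N2 ≤ j →
      pderiv (some (k, j)) (∑ l, γ l * P l) = 0 := by
    intro j hj
    rw [map_sum]
    apply Finset.sum_eq_zero
    intro l _
    rw [pderiv_mul, hγ l j hj, hP l j hj, zero_mul, mul_zero, add_zero]
  rw [varDeriv_eq_range D _ k (max N1 N2) hsum,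
    adjDeriv_eq_range D γ P k (max N1 N2) hγ,
    adjDeriv_eq_range D P γ k (max N1 N2) hP,
    ← Finset.sum_add_distrib]
  refine Finset.sum_congr rfl fun j _ => ?_
  rw [map_sum]
  have : ∀ l : Fin s, pderiv (some (k, j)) (γ l * P l)
      = pderiv (some (k, j)) (γ l) * P l + pderiv (some (k, j)) (P l) * γ l := by
    intro l; rw [pderiv_mul]; ring
  rw [Finset.sum_congr rfl fun l _ => this l, iter_sum, Finset.mul_sum,
    ← Finset.sum_add_distrib]
  exact Finset.sum_congr rfl fun l _ => by rw [iter_add, mul_add]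

lemma byparts (i : ℕ) (u v : DiffPoly K s) :
    ∃ h, u * (⇑D)^[i] v
      = (-1 : DiffPoly K s) ^ i * (⇑D)^[i] u * v + D h := by
  induction i generalizing v with
  | zero => exact ⟨0, by simp⟩
  | succ n ih =>
    obtain ⟨h0, hh0⟩ := ih (D v)
    refine ⟨(-1 : DiffPoly K s) ^ n * (⇑D)^[n] u * v + h0, ?_⟩
    have hL : u * (⇑D)^[n + 1] v = (-1 : DiffPoly K s) ^ n * (⇑D)^[n] u * D v + D h0 := by
      rw [Function.iterate_succ_apply, hh0]
    have hleib : D ((-1 : DiffPoly K s) ^ n * (⇑D)^[n] u * v)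
        = (-1 : DiffPoly K s) ^ n * (⇑D)^[n] u * D v
          + (-1 : DiffPoly K s) ^ n * (⇑D)^[n + 1] u * v := by
      rw [Derivation.leibniz, smul_eq_mul, smul_eq_mul,
        Derivation.leibniz, smul_eq_mul, smul_eq_mul, D_neg_one_pow,
        Function.iterate_succ_apply']
      ring
    rw [map_add, hleib, hL, pow_succ]
    ring

lemma exists_sum {ι : Type*} (t : Finset ι) (x y : ι → DiffPoly K s)
    (h : ∀ i ∈ t, ∃ h, x i = y i + D h) :
    ∃ h, ∑ i ∈ t, x i = ∑ i ∈ t, y i + D h := by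
  classical
  induction t using Finset.induction with
  | empty => exact ⟨0, by simp⟩
  | @insert a t ha ih =>
    obtain ⟨h1, hh1⟩ := h a (Finset.mem_insert_self a t)
    obtain ⟨h2, hh2⟩ := ih fun i hi => h i (Finset.mem_insert_of_mem hi)
    exact ⟨h1 + h2, by
      rw [Finset.sum_insert ha, Finset.sum_insert ha, hh1, hh2, map_add]; ring⟩

end Stmt12Aux

/-- (the key Lemma) In the algebra of differential polynomials with total
derivative `D`, let `a_0, …, a_r` be `s×s` matrices, `G_α, γ_α, Q ∈ A^s` with each
`γ_α` self-adjoint (`γ_α'(P) = γ_α'^†(P)` for all `P`), and `f_β, g_{αβ} ∈ A` with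
`D(f_β) = γ_β·Q`, `D(g_{αβ}) = G_β·γ_α`. Set
`R(Q) = Σ_i a_i·D^i(Q) + Σ_β f_β·G_β` and
`ζ_α = Σ_i (−1)^i D^i(a_iᵀ·γ_α) − Σ_β g_{αβ}·γ_β`. Then for each `α` the Lie
derivative of `γ_α` along `R(Q)` equals the variational derivative of `Q·ζ_α`:
`γ_α'(R(Q)) + (R(Q))'^†(γ_α) = δ(Q·ζ_α)/δu` componentwise. -/
theorem stmt_12 {K : Type*} [Field K] [CharZero K] (s r p : ℕ) (hs : 1 ≤ s)
    (D : Derivation K (DiffPoly K s) (DiffPoly K s))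
    (hx : D (MvPolynomial.X none) = 1)
    (hu : ∀ (k : Fin s) (j : ℕ),
      D (MvPolynomial.X (some (k, j))) = MvPolynomial.X (some (k, j + 1)))
    (a : ℕ → Matrix (Fin s) (Fin s) (DiffPoly K s))
    (G γv : Fin p → Fin s → DiffPoly K s) (Q : Fin s → DiffPoly K s)
    (hself : ∀ (α : Fin p) (P : Fin s → DiffPoly K s) (k : Fin s),
      dirDeriv D (γv α) P k = adjDeriv D (γv α) P k)
    (f : Fin p → DiffPoly K s) (g : Fin p → Fin p → DiffPoly K s)
    (hf : ∀ β, D (f β) = ∑ k, γv β k * Q k)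
    (hg : ∀ α β, D (g α β) = ∑ k, G β k * γv α k)
    (RQ : Fin s → DiffPoly K s)
    (hRQ : ∀ k, RQ k = (∑ i ∈ Finset.range (r + 1), ∑ l, a i k l * (⇑D)^[i] (Q l))
        + ∑ β, f β * G β k)
    (ζ : Fin p → Fin s → DiffPoly K s)
    (hζ : ∀ α k, ζ α k = (∑ i ∈ Finset.range (r + 1),
          (-1 : DiffPoly K s) ^ i * (⇑D)^[i] (∑ l, a i l k * γv α l))
        - ∑ β, g α β * γv β k) :
    ∀ (α : Fin p) (k : Fin s),
      dirDeriv D (γv α) RQ k + adjDeriv D RQ (γv α) k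
        = varDeriv D (∑ k', Q k' * ζ α k') k := by
  classical
  open Stmt12Aux Finset MvPolynomial in
  intro α k
  rw [hself α RQ k, ← varDeriv_dot D (γv α) RQ k]
  -- It suffices to show the two arguments of varDeriv differ by a total derivative.
  have hB : ∀ i ∈ Finset.range (r + 1), ∃ h,
      (∑ l, ∑ m, (a i l m * γv α l) * (⇑D)^[i] (Q m))
        = (∑ l, ∑ m,
            (-1 : DiffPoly K s) ^ i * (⇑D)^[i] (a i l m * γv α l) * Q m) + D h := by
    intro i _
    apply exists_sum
    intro l _
    apply exists_sum
    intro m _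
    exact byparts D i _ _
  obtain ⟨h1v, hh1⟩ := exists_sum D _ _ _ hB
  have h2 : ∑ β, (f β * (∑ k', G β k' * γv α k')
        + g α β * (∑ k', γv β k' * Q k'))
      = D (∑ β, f β * g α β) := by
    rw [map_sum]
    refine Finset.sum_congr rfl fun β _ => ?_
    rw [Derivation.leibniz, smul_eq_mul, smul_eq_mul, hf β, hg α β]
  have eL : ∑ l, γv α l * RQ l
      = (∑ i ∈ Finset.range (r + 1), ∑ l, ∑ m,
          (a i l m * γv α l) * (⇑D)^[i] (Q m))
        + ∑ β, f β * (∑ k', G β k' * γv α k') := by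
    simp only [hRQ, mul_add, Finset.sum_add_distrib]
    congr 1
    · simp only [Finset.mul_sum]
      rw [Finset.sum_comm]
      exact Finset.sum_congr rfl fun i _ => Finset.sum_congr rfl fun l _ =>
        Finset.sum_congr rfl fun m _ => by ring
    · simp only [Finset.mul_sum]
      rw [Finset.sum_comm]
      exact Finset.sum_congr rfl fun β _ => Finset.sum_congr rfl fun l _ => by ring
  have eR : ∑ k', Q k' * ζ α k'
      = (∑ i ∈ Finset.range (r + 1), ∑ l, ∑ m,
          (-1 : DiffPoly K s) ^ i * (⇑D)^[i] (a i l m * γv α l) * Q m)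
        - ∑ β, g α β * (∑ k', γv β k' * Q k') := by
    simp only [hζ, mul_sub, Finset.sum_sub_distrib]
    congr 1
    · simp only [iter_sum D, Finset.mul_sum]
      rw [Finset.sum_comm]
      refine Finset.sum_congr rfl fun i _ => ?_
      rw [Finset.sum_comm]
      exact Finset.sum_congr rfl fun l _ => Finset.sum_congr rfl fun m _ => by ring
    · simp only [Finset.mul_sum]
      rw [Finset.sum_comm]
      exact Finset.sum_congr rfl fun β _ => Finset.sum_congr rfl fun k' _ => by ring
  have key : ∑ l, γv α l * RQ l
      = (∑ k', Q k' * ζ α k') + D (h1v + ∑ β, f β * g α β) := by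
    rw [eL, eR, hh1, map_add, ← h2, Finset.sum_add_distrib]
    ring
  rw [key, varDeriv_add, varDeriv_D D hx hu, add_zero]
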